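/- arXiv:1905.07592 — 4 statements merged into one kernel-verified Lean document; each statement's English description precedes it below -/
import Mathlib

section
/- Let λ ∈ ℂ \ {0} and set α := Re(1/λ). There exist positive constants P and Q (depending on α) such that P/n^α ≤ ∏_{k=1}^n |1 - 1/(kλ)| ≤ Q/n^α for all positive integers n. -/
open Filter Finset Topology Nat

private lemma prod_shift (μ : ℂ) (n : ℕ) :
    ∏ j ∈ range n, ((1:ℂ) - μ + j) = ∏ k ∈ Icc 1 n, ((k:ℂ) - μ) := by
  induction n with
  | zero => simp
  | succ n ih =>
      rw [Finset.prod_range_succ, ih, Finset.prod_Icc_succ_top (Nat.le_add_left 1 n)]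
      push_cast; ring

/-- For `λ ≠ 0` with `λ ∉ {1/k : k ≥ 1}` and `α := Re(1/λ)`, there exist positive
constants `P`, `Q` with `P/n^α ≤ ∏_{k=1}^n |1 - 1/(kλ)| ≤ Q/n^α` for all `n ≥ 1`. -/
theorem prod_abs_one_sub_inv_bounds (lam : ℂ) (hlam : lam ≠ 0)
    (hlam' : ∀ k : ℕ, 1 ≤ k → lam ≠ 1 / (k : ℂ)) :
    ∃ P Q : ℝ, 0 < P ∧ 0 < Q ∧ ∀ n : ℕ, 1 ≤ n →
      P / (n : ℝ) ^ ((1 / lam).re) ≤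
        (∏ k ∈ Finset.Icc 1 n, ‖(1 - 1 / (k * lam) : ℂ)‖) ∧
      (∏ k ∈ Finset.Icc 1 n, ‖(1 - 1 / (k * lam) : ℂ)‖) ≤
        Q / (n : ℝ) ^ ((1 / lam).re) := by
  set μ : ℂ := 1 / lam with hμ
  have hkμ : ∀ k : ℕ, 1 ≤ k → (k : ℂ) - μ ≠ 0 := by
    intro k hk h
    have hk0 : (k : ℂ) ≠ 0 := Nat.cast_ne_zero.mpr (by omega)
    have hkeq : (k : ℂ) = 1 / lam := by rw [← hμ]; linear_combination h
    apply hlam' k hk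
    rw [eq_div_iff hk0, hkeq]
    field_simp
  have hfac : ∀ k : ℕ, 1 ≤ k → (1 : ℂ) - 1 / (k * lam) = ((k : ℂ) - μ) / k := by
    intro k hk
    have hk0 : (k : ℂ) ≠ 0 := Nat.cast_ne_zero.mpr (by omega)
    rw [hμ]
    field_simp
  have hfacne : ∀ k : ℕ, 1 ≤ k → (1 : ℂ) - 1 / (k * lam) ≠ 0 := by
    intro k hk
    rw [hfac k hk]
    exact div_ne_zero (hkμ k hk) (Nat.cast_ne_zero.mpr (by omega))
  have hΓ : Complex.Gamma (1 - μ) ≠ 0 := by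
    apply Complex.Gamma_ne_zero
    intro m h
    have : ((m + 1 : ℕ) : ℂ) - μ = 0 := by push_cast; linear_combination h
    exact hkμ (m + 1) (by omega) this
  set A : ℕ → ℝ := fun n => ∏ k ∈ Finset.Icc 1 n, ‖(1 - 1 / (k * lam) : ℂ)‖ with hA
  set f : ℕ → ℝ := fun n => (n : ℝ) ^ μ.re * A n with hf
  have hApos : ∀ n : ℕ, 0 < A n := by
    intro n
    apply Finset.prod_pos
    intro k hk
    exact norm_pos_iff.mpr (hfacne k (Finset.mem_Icc.mp hk).1)
  have hfpos : ∀ n : ℕ, 1 ≤ n → 0 < f n := by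
    intro n hn
    have : (0:ℝ) < (n:ℝ) := by exact_mod_cast hn
    exact mul_pos (Real.rpow_pos_of_pos this _) (hApos n)
  set g : ℕ → ℂ := fun n => (n : ℂ) ^ μ * ∏ k ∈ Finset.Icc 1 n, (1 - 1 / (k * lam)) with hg
  set X : ℕ → ℂ := fun n => (((n : ℂ) + 1 - μ) / n) * Complex.GammaSeq (1 - μ) n with hX
  have key : ∀ n : ℕ, 1 ≤ n → g n * X n = 1 := by
    intro n hn
    have hn0 : (n : ℂ) ≠ 0 := Nat.cast_ne_zero.mpr (by omega)
    have hP : (∏ k ∈ Icc 1 n, ((k:ℂ) - μ)) ≠ 0 :=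
      Finset.prod_ne_zero_iff.mpr fun k hk => hkμ k (Finset.mem_Icc.mp hk).1
    have hfactne : ((n ! : ℕ) : ℂ) ≠ 0 := Nat.cast_ne_zero.mpr n.factorial_ne_zero
    have hfact : (∏ k ∈ Icc 1 n, (k : ℂ)) = ((n ! : ℕ) : ℂ) := by
      rw [← Nat.cast_prod]
      congr 1
      rw [← Finset.Ico_add_one_right_eq_Icc]
      exact Finset.prod_Ico_id_eq_factorial n
    have hprod : ∏ k ∈ Finset.Icc 1 n, ((1:ℂ) - 1 / (k * lam)) =
        (∏ k ∈ Icc 1 n, ((k:ℂ) - μ)) / ((n ! : ℕ) : ℂ) := by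
      rw [← hfact, ← Finset.prod_div_distrib]
      exact Finset.prod_congr rfl fun k hk => hfac k (Finset.mem_Icc.mp hk).1
    have hden : ∏ j ∈ range (n + 1), ((1 - μ) + (j:ℂ)) =
        ((n:ℂ) + 1 - μ) * ∏ k ∈ Icc 1 n, ((k:ℂ) - μ) := by
      have h1 := prod_shift μ (n + 1)
      rw [Finset.prod_Icc_succ_top (Nat.le_add_left 1 n)] at h1
      rw [show (fun j : ℕ => (1 - μ) + (j:ℂ)) = fun j : ℕ => (1:ℂ) - μ + j from by
        funext j; ring]
      rw [h1]; push_cast; ring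
    have hcpow : (n : ℂ) ^ μ * (n : ℂ) ^ ((1:ℂ) - μ) = (n : ℂ) := by
      rw [← Complex.cpow_add _ _ hn0]
      simp
    have hne2 : ((n:ℂ) + 1 - μ) ≠ 0 := by
      have := hkμ (n + 1) (by omega)
      push_cast at this
      intro h; exact this (by linear_combination h)
    simp only [hg, hX]
    rw [hprod, Complex.GammaSeq, hden]
    field_simp
    linear_combination hcpow
  -- limits
  have hXlim : Tendsto X atTop (𝓝 (Complex.Gamma (1 - μ))) := by
    have h1 : Tendsto (fun n : ℕ => ((n : ℂ) + 1 - μ) / n) atTop (𝓝 1) := by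
      have h0 : Tendsto (fun n : ℕ => ((1:ℂ) - μ) * ((n:ℝ)⁻¹ : ℝ)) atTop (𝓝 0) := by
        have := (Complex.continuous_ofReal.tendsto 0).comp
          (tendsto_inv_atTop_nhds_zero_nat)
        simpa using this.const_mul ((1:ℂ) - μ)
      have h2 : Tendsto (fun n : ℕ => 1 + ((1:ℂ) - μ) * ((n:ℝ)⁻¹ : ℝ)) atTop (𝓝 1) := by
        simpa using (tendsto_const_nhds (x := (1:ℂ))).add h0
      apply h2.congr'
      filter_upwards [eventually_ge_atTop 1] with n hn
      have hn0 : (n : ℂ) ≠ 0 := Nat.cast_ne_zero.mpr (by omega)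
      push_cast
      field_simp
      ring
    simpa using h1.mul (Complex.GammaSeq_tendsto_Gamma (1 - μ))
  have hglim : Tendsto g atTop (𝓝 (Complex.Gamma (1 - μ))⁻¹) := by
    have h1 : Tendsto (fun n => (X n)⁻¹) atTop (𝓝 (Complex.Gamma (1 - μ))⁻¹) :=
      hXlim.inv₀ hΓ
    apply h1.congr'
    filter_upwards [eventually_ge_atTop 1] with n hn
    exact (eq_inv_of_mul_eq_one_left (by linear_combination key n hn)).symm
  have hflim : Tendsto f atTop (𝓝 ‖Complex.Gamma (1 - μ)‖⁻¹) := by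
    have h1 : Tendsto (fun n => ‖g n‖) atTop
        (𝓝 ‖(Complex.Gamma (1 - μ))⁻¹‖) :=
      (continuous_norm.tendsto _).comp hglim
    rw [norm_inv] at h1
    apply h1.congr'
    filter_upwards [eventually_ge_atTop 1] with n hn
    have hn0 : (0:ℝ) < (n:ℝ) := by exact_mod_cast hn
    rw [hg, hf, hA]
    rw [norm_mul, norm_prod]
    congr 1
    exact Complex.norm_cpow_eq_rpow_re_of_pos hn0 μ
  set L : ℝ := ‖Complex.Gamma (1 - μ)‖⁻¹ with hL
  have hLpos : 0 < L := by
    rw [hL]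
    exact inv_pos.mpr (norm_pos_iff.mpr hΓ)
  -- extract N
  obtain ⟨N, hN⟩ := (Metric.tendsto_atTop.mp hflim) (L / 2) (by positivity)
  set N' : ℕ := max N 1 with hN'
  set S : Finset ℝ := insert (L/2) (insert (3*L/2) ((Finset.Icc 1 N').image f)) with hS
  have hSne : S.Nonempty := ⟨L/2, by simp [hS]⟩
  have hSpos : ∀ x ∈ S, 0 < x := by
    intro x hx
    simp only [hS, Finset.mem_insert, Finset.mem_image, Finset.mem_Icc] at hx
    rcases hx with h | h | ⟨m, ⟨hm1, _⟩, rfl⟩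
    · rw [h]; positivity
    · rw [h]; positivity
    · exact hfpos m hm1
  refine ⟨S.min' hSne, S.max' hSne, hSpos _ (S.min'_mem hSne), hSpos _ (S.max'_mem hSne),
    fun n hn => ?_⟩
  have hbound : S.min' hSne ≤ f n ∧ f n ≤ S.max' hSne := by
    by_cases hcase : n ≤ N'
    · have hmem : f n ∈ S := by
        simp only [hS, Finset.mem_insert, Finset.mem_image, Finset.mem_Icc]
        exact Or.inr (Or.inr ⟨n, ⟨hn, hcase⟩, rfl⟩)
      exact ⟨S.min'_le _ hmem, S.le_max' _ hmem⟩
    · push_neg at hcase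
      have hnN : N ≤ n := le_trans (le_max_left N 1) (le_of_lt hcase)
      have := hN n hnN
      rw [Real.dist_eq, abs_lt] at this
      constructor
      · calc S.min' hSne ≤ L/2 := S.min'_le _ (by simp [hS])
          _ ≤ f n := by linarith [this.1]
      · calc f n ≤ 3*L/2 := by linarith [this.2]
          _ ≤ S.max' hSne := S.le_max' _ (by simp [hS])
  have hrpow : (0:ℝ) < (n:ℝ) ^ μ.re :=
    Real.rpow_pos_of_pos (by exact_mod_cast hn) _
  constructor
  · rw [div_le_iff₀ hrpow]
    calc S.min' hSne ≤ f n := hbound.1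
      _ = A n * (n:ℝ) ^ μ.re := by rw [hf]; ring
  · rw [le_div_iff₀ hrpow]
    calc A n * (n:ℝ) ^ μ.re = f n := by rw [hf]; ring
      _ ≤ S.max' hSne := hbound.2
end

section
/- Let 1 < p < ∞ and α < 1/p' where 1/p + 1/p' = 1 (so (1-α)p > 1). Then the operator G defined by (G x)_n = (1/n^{1-α}) ∑_{m=1}^n x_m / m^α is bounded from ℓ^p to ℓ^p. -/
open Finset
open scoped ENNReal NNReal

lemma reindex_shift (a b : ℕ) (f : ℕ → ℝ) :
    ∑ i ∈ Finset.Ico a b, f (i + 1) = ∑ m ∈ Finset.Icc (a+1) b, f m := by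
  apply Finset.sum_nbij' (fun i => i + 1) (fun j => j - 1) <;> intros <;>
    simp_all [Finset.mem_Ico, Finset.mem_Icc] <;> omega

lemma antitoneOn_rpow_neg {c : ℝ} (hc : c ≤ 0) (s : Set ℝ) (hs : ∀ x ∈ s, 1 ≤ x) :
    AntitoneOn (fun t : ℝ => t ^ c) s := by
  intro x hx y hy hxy
  exact Real.rpow_le_rpow_of_nonpos (lt_of_lt_of_le one_pos (hs x hx)) hxy hc

lemma sumA (β : ℝ) (hβ : β < 1) : ∃ C : ℝ, 0 < C ∧ ∀ n : ℕ, 1 ≤ n →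
    ∑ m ∈ Finset.Icc 1 n, (m : ℝ) ^ (-β) ≤ C * (n : ℝ) ^ (1 - β) := by
  rcases le_or_gt β 0 with h0 | h0
  · refine ⟨1, one_pos, fun n hn => ?_⟩
    have hn' : (0:ℝ) < n := by exact_mod_cast hn
    calc ∑ m ∈ Finset.Icc 1 n, (m : ℝ) ^ (-β)
        ≤ ∑ _m ∈ Finset.Icc 1 n, (n : ℝ) ^ (-β) := by
          refine Finset.sum_le_sum fun m hm => ?_
          have hm' := (Finset.mem_Icc.1 hm)
          exact Real.rpow_le_rpow (by positivity) (by exact_mod_cast hm'.2) (by linarith)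
      _ = (n : ℝ) * (n : ℝ) ^ (-β) := by
          rw [Finset.sum_const, Nat.card_Icc]; simp
      _ = 1 * (n : ℝ) ^ (1 - β) := by
          rw [one_mul, ← Real.rpow_one_add' (le_of_lt hn') (by linarith)]
          ring_nf
  · have h1β : 0 < 1 - β := by linarith
    refine ⟨1 + 1/(1-β), by positivity, fun n hn => ?_⟩
    have hn' : (0:ℝ) < n := by exact_mod_cast hn
    have hone : (1:ℝ) ≤ (n:ℝ) ^ (1-β) :=
      Real.one_le_rpow (by exact_mod_cast hn) (by linarith)
    have hsplit : ∑ m ∈ Finset.Icc 1 n, (m : ℝ) ^ (-β)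
        = 1 + ∑ m ∈ Finset.Icc 2 n, (m : ℝ) ^ (-β) := by
      rw [← Finset.sum_erase_add _ _ (show 1 ∈ Finset.Icc 1 n by simp [hn])]
      have : (Finset.Icc 1 n).erase 1 = Finset.Icc 2 n := by
        ext m; simp [Finset.mem_Icc]; omega
      rw [this]; simp [Real.one_rpow]; ring
    have hint : ∑ m ∈ Finset.Icc 2 n, (m : ℝ) ^ (-β)
        ≤ ∫ x in (1:ℕ)..(n:ℕ), (x:ℝ) ^ (-β) := by
      rw [← reindex_shift]
      exact AntitoneOn.sum_le_integral_Ico hn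
        (antitoneOn_rpow_neg (by linarith) _ (fun x hx => by
          simpa using hx.1))
    have hval : (∫ x in (1:ℕ)..(n:ℕ), (x:ℝ) ^ (-β))
        = ((n:ℝ) ^ (1-β) - 1) / (1-β) := by
      rw [integral_rpow (Or.inl (by linarith))]
      simp [show -β + 1 = 1 - β by ring, Real.one_rpow]
    calc ∑ m ∈ Finset.Icc 1 n, (m : ℝ) ^ (-β)
        ≤ 1 + ((n:ℝ) ^ (1-β) - 1) / (1-β) := by rw [hsplit]; rw [hval] at hint; linarith
      _ ≤ (n:ℝ) ^ (1-β) + (n:ℝ) ^ (1-β) / (1-β) := by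
          have : ((n:ℝ) ^ (1-β) - 1) / (1-β) ≤ (n:ℝ) ^ (1-β) / (1-β) := by
            gcongr
            linarith
          linarith
      _ = (1 + 1/(1-β)) * (n : ℝ) ^ (1 - β) := by ring

lemma sumB (γ : ℝ) (hγ : 1 < γ) : ∃ C : ℝ, 0 < C ∧ ∀ m N : ℕ, 1 ≤ m →
    ∑ n ∈ Finset.Icc m N, (n : ℝ) ^ (-γ) ≤ C * (m : ℝ) ^ (1 - γ) := by
  have hγ1 : 0 < γ - 1 := by linarith
  refine ⟨1 + 1/(γ-1), by positivity, fun m N hm => ?_⟩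
  have hm' : (0:ℝ) < m := by exact_mod_cast hm
  have hm1 : (1:ℝ) ≤ m := by exact_mod_cast hm
  have hpow : (0:ℝ) < (m:ℝ) ^ (1-γ) := Real.rpow_pos_of_pos hm' _
  rcases lt_or_ge N m with hNm | hNm
  · rw [Finset.Icc_eq_empty (by omega)]
    simp only [Finset.sum_empty]
    positivity
  · have hsplit : ∑ n ∈ Finset.Icc m N, (n : ℝ) ^ (-γ)
        = (m:ℝ) ^ (-γ) + ∑ n ∈ Finset.Icc (m+1) N, (n : ℝ) ^ (-γ) := by
      rw [← Finset.sum_erase_add _ _ (show m ∈ Finset.Icc m N by simp [hNm])]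
      have : (Finset.Icc m N).erase m = Finset.Icc (m+1) N := by
        ext k; simp [Finset.mem_Icc]
      rw [this]; ring
    have hint : ∑ n ∈ Finset.Icc (m+1) N, (n : ℝ) ^ (-γ)
        ≤ ∫ x in (m:ℕ)..(N:ℕ), (x:ℝ) ^ (-γ) := by
      rw [← reindex_shift]
      exact AntitoneOn.sum_le_integral_Ico hNm
        (antitoneOn_rpow_neg (by linarith) _ (fun x hx => le_trans hm1 hx.1))
    have hval : (∫ x in (m:ℕ)..(N:ℕ), (x:ℝ) ^ (-γ))
        = ((N:ℝ) ^ (1-γ) - (m:ℝ) ^ (1-γ)) / (1-γ) := by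
      have hN' : (0:ℝ) < N := lt_of_lt_of_le hm' (Nat.cast_le.2 hNm)
      have h0 : (0:ℝ) ∉ Set.uIcc ((m:ℕ):ℝ) ((N:ℕ):ℝ) := by
        intro h
        rw [Set.mem_uIcc] at h
        rcases h with ⟨h1, _⟩ | ⟨h1, _⟩ <;> linarith
      rw [integral_rpow (Or.inr ⟨by intro h; linarith, h0⟩)]
      rw [show -γ + 1 = 1 - γ by ring]
    have hval2 : ((N:ℝ) ^ (1-γ) - (m:ℝ) ^ (1-γ)) / (1-γ) ≤ (m:ℝ) ^ (1-γ) / (γ-1) := by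
      have hN0 : (0:ℝ) ≤ (N:ℝ) ^ (1-γ) := Real.rpow_nonneg (by positivity) _
      rw [show (1-γ) = -(γ-1) by ring, div_neg, ← neg_div, neg_sub]
      gcongr
      have : (0:ℝ) ≤ (N:ℝ) ^ (-(γ-1)) := Real.rpow_nonneg (by positivity) _
      linarith
    have hmono : (m:ℝ) ^ (-γ) ≤ (m:ℝ) ^ (1-γ) :=
      Real.rpow_le_rpow_of_exponent_le hm1 (by linarith)
    calc ∑ n ∈ Finset.Icc m N, (n : ℝ) ^ (-γ)
        ≤ (m:ℝ) ^ (1-γ) + (m:ℝ) ^ (1-γ) / (γ-1) := by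
          rw [hsplit]; rw [hval] at hint; linarith
      _ = (1 + 1/(γ-1)) * (m : ℝ) ^ (1-γ) := by ring

lemma natCast_rpow_ennreal (n : ℕ) (hn : 1 ≤ n) (r : ℝ) :
    ((n : ℝ≥0∞)) ^ r = ENNReal.ofReal ((n : ℝ) ^ r) := by
  rw [← ENNReal.ofReal_rpow_of_pos (by exact_mod_cast hn), ENNReal.ofReal_natCast]

lemma sumA_ennreal (β : ℝ) (hβ : β < 1) : ∃ C : ℝ, 0 < C ∧ ∀ n : ℕ, 1 ≤ n →
    ∑ m ∈ Finset.Icc 1 n, (m : ℝ≥0∞) ^ (-β) ≤ ENNReal.ofReal C * (n : ℝ≥0∞) ^ (1 - β) := by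
  obtain ⟨C, hC, hCle⟩ := sumA β hβ
  refine ⟨C, hC, fun n hn => ?_⟩
  have : ∑ m ∈ Finset.Icc 1 n, (m : ℝ≥0∞) ^ (-β)
      = ENNReal.ofReal (∑ m ∈ Finset.Icc 1 n, (m : ℝ) ^ (-β)) := by
    rw [ENNReal.ofReal_sum_of_nonneg (fun m _ => Real.rpow_nonneg (by positivity) _)]
    exact Finset.sum_congr rfl fun m hm =>
      natCast_rpow_ennreal m (Finset.mem_Icc.1 hm).1 _
  rw [this, natCast_rpow_ennreal n hn, ← ENNReal.ofReal_mul hC.le]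
  exact ENNReal.ofReal_le_ofReal (hCle n hn)

lemma tailB_ennreal (γ : ℝ) (hγ : 1 < γ) : ∃ C : ℝ, 0 < C ∧ ∀ m : ℕ, 1 ≤ m →
    (∑' n : ℕ, (if m ≤ n then ((n : ℝ≥0∞)) ^ (-γ) else 0))
      ≤ ENNReal.ofReal C * (m : ℝ≥0∞) ^ (1 - γ) := by
  obtain ⟨C, hC, hCle⟩ := sumB γ hγ
  refine ⟨C, hC, fun m hm => ?_⟩
  rw [ENNReal.tsum_eq_iSup_sum]
  refine iSup_le fun s => ?_
  set N := s.sup id with hN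
  have hsub : s.filter (fun n => m ≤ n) ⊆ Finset.Icc m N := by
    intro n hn
    rw [Finset.mem_filter] at hn
    exact Finset.mem_Icc.2 ⟨hn.2, Finset.le_sup (f := id) hn.1⟩
  calc ∑ n ∈ s, (if m ≤ n then ((n : ℝ≥0∞)) ^ (-γ) else 0)
      = ∑ n ∈ s.filter (fun n => m ≤ n), ((n : ℝ≥0∞)) ^ (-γ) := by
        rw [Finset.sum_filter]
    _ ≤ ∑ n ∈ Finset.Icc m N, ((n : ℝ≥0∞)) ^ (-γ) :=
        Finset.sum_le_sum_of_subset hsub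
    _ = ENNReal.ofReal (∑ n ∈ Finset.Icc m N, (n : ℝ) ^ (-γ)) := by
        rw [ENNReal.ofReal_sum_of_nonneg (fun n _ => Real.rpow_nonneg (by positivity) _)]
        exact Finset.sum_congr rfl fun n hn =>
          natCast_rpow_ennreal n (le_trans hm (Finset.mem_Icc.1 hn).1) _
    _ ≤ ENNReal.ofReal C * (m : ℝ≥0∞) ^ (1 - γ) := by
        rw [natCast_rpow_ennreal m hm, ← ENNReal.ofReal_mul hC.le]
        exact ENNReal.ofReal_le_ofReal (hCle m N hm)

lemma core (p α : ℝ) (hp : 1 < p) (hα : α < 1 - 1/p) :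
    ∃ K : ℝ≥0∞, K ≠ ⊤ ∧ 0 < K ∧ ∀ b : ℕ → ℝ≥0∞,
      ∑' n : ℕ, ((n : ℝ≥0∞) ^ ((α-1)*p) *
          (∑ m ∈ Finset.Icc 1 n, b m * (m : ℝ≥0∞) ^ (-α)) ^ p)
        ≤ K * ∑' m : ℕ, (b m) ^ p := by
  have hp0 : 0 < p := lt_trans one_pos hp
  set q := Real.conjExponent p with hqdef
  have hpq : p.HolderConjugate q := Real.HolderConjugate.conjExponent hp
  have hq0 : 0 < q := hpq.symm.pos
  have hq1 : 1 < q := hpq.symm.lt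
  have hqp : (p - 1) * q = p := hpq.sub_one_mul_conj
  set ε := (1 - 1/p - α)/2 with hεdef
  have hε : 0 < ε := by
    have : 0 < 1 - 1/p - α := by linarith
    positivity
  set β := (α + ε) * q with hβdef
  have hβ1 : β < 1 := by
    have h1 : α + ε < q⁻¹ := by
      have := hpq.one_sub_inv
      rw [one_div] at hα hεdef
      linarith [hεdef]
    have := mul_lt_mul_of_pos_right h1 hq0
    rwa [inv_mul_cancel₀ (ne_of_gt hq0)] at this
  set γ := 1 + ε * p with hγdef
  have hγ1 : 1 < γ := by nlinarith
  obtain ⟨C1, hC1, hA⟩ := sumA_ennreal β hβ1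
  obtain ⟨C3, hC3, hTail⟩ := tailB_ennreal γ hγ1
  have hp1 : (0:ℝ) ≤ p - 1 := by linarith
  set C1' := ENNReal.ofReal C1 with hC1'def
  set C3' := ENNReal.ofReal C3 with hC3'def
  have hC1pos : 0 < C1' := ENNReal.ofReal_pos.2 hC1
  have hC3pos : 0 < C3' := ENNReal.ofReal_pos.2 hC3
  have hC1top : C1' ^ (p-1) ≠ ⊤ := ENNReal.rpow_ne_top_of_nonneg hp1 ENNReal.ofReal_ne_top
  refine ⟨C1' ^ (p-1) * C3', by
      exact ENNReal.mul_ne_top hC1top ENNReal.ofReal_ne_top, by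
      exact ENNReal.mul_pos (ENNReal.rpow_pos hC1pos ENNReal.ofReal_ne_top).ne' hC3pos.ne',
      fun b => ?_⟩
  set A : ℕ → ℝ≥0∞ := fun n => ∑ m ∈ Finset.Icc 1 n, (b m) ^ p * (m : ℝ≥0∞) ^ (ε*p)
    with hAdef
  set V : ℕ → ℝ≥0∞ := fun n =>
    if 1 ≤ n then (n : ℝ≥0∞) ^ (-γ) * A n else 0 with hVdef
  -- pointwise bound
  have hpt : ∀ n : ℕ, (n : ℝ≥0∞) ^ ((α-1)*p) *
      (∑ m ∈ Finset.Icc 1 n, b m * (m : ℝ≥0∞) ^ (-α)) ^ p ≤ C1' ^ (p-1) * V n := by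
    intro n
    rcases Nat.eq_zero_or_pos n with rfl | hn
    · rw [show Finset.Icc 1 0 = (∅ : Finset ℕ) by simp]
      simp [ENNReal.zero_rpow_of_pos hp0]
    · have hn1 : 1 ≤ n := hn
      have hne : (n : ℝ≥0∞) ≠ 0 := by exact_mod_cast Nat.cast_ne_zero.2 (by omega)
      have hnt : (n : ℝ≥0∞) ≠ ⊤ := ENNReal.natCast_ne_top n
      have hS : ∑ m ∈ Finset.Icc 1 n, b m * (m : ℝ≥0∞) ^ (-α)
          ≤ (A n) ^ (1/p) * (C1' * (n : ℝ≥0∞) ^ (1-β)) ^ (1/q) := by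
        have hstep : ∑ m ∈ Finset.Icc 1 n, b m * (m : ℝ≥0∞) ^ (-α)
            = ∑ m ∈ Finset.Icc 1 n,
                (b m * (m : ℝ≥0∞) ^ ε) * ((m : ℝ≥0∞) ^ (-(α+ε))) := by
          refine Finset.sum_congr rfl fun m hm => ?_
          have hm1 : 1 ≤ m := (Finset.mem_Icc.1 hm).1
          have hme : (m : ℝ≥0∞) ≠ 0 := by exact_mod_cast Nat.cast_ne_zero.2 (by omega)
          have hmt : (m : ℝ≥0∞) ≠ ⊤ := ENNReal.natCast_ne_top m
          rw [mul_assoc, ← ENNReal.rpow_add _ _ hme hmt]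
          ring_nf
        rw [hstep]
        calc ∑ m ∈ Finset.Icc 1 n, (b m * (m : ℝ≥0∞) ^ ε) * ((m : ℝ≥0∞) ^ (-(α+ε)))
            ≤ (∑ m ∈ Finset.Icc 1 n, (b m * (m : ℝ≥0∞) ^ ε) ^ p) ^ (1/p) *
              (∑ m ∈ Finset.Icc 1 n, ((m : ℝ≥0∞) ^ (-(α+ε))) ^ q) ^ (1/q) :=
              ENNReal.inner_le_Lp_mul_Lq _ _ _ hpq
          _ ≤ (A n) ^ (1/p) * (C1' * (n : ℝ≥0∞) ^ (1-β)) ^ (1/q) := by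
              apply mul_le_mul
              · apply ENNReal.rpow_le_rpow _ (by positivity)
                apply le_of_eq
                refine Finset.sum_congr rfl fun m hm => ?_
                rw [ENNReal.mul_rpow_of_nonneg _ _ hp0.le, ← ENNReal.rpow_mul]
              · apply ENNReal.rpow_le_rpow _ (by positivity)
                have : ∑ m ∈ Finset.Icc 1 n, ((m : ℝ≥0∞) ^ (-(α+ε))) ^ q
                    = ∑ m ∈ Finset.Icc 1 n, (m : ℝ≥0∞) ^ (-β) := by
                  refine Finset.sum_congr rfl fun m hm => ?_
                  rw [← ENNReal.rpow_mul]
                  congr 1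
                  rw [hβdef]; ring
                rw [this]
                exact hA n hn1
              · exact zero_le
              · exact zero_le
      calc (n : ℝ≥0∞) ^ ((α-1)*p) *
            (∑ m ∈ Finset.Icc 1 n, b m * (m : ℝ≥0∞) ^ (-α)) ^ p
          ≤ (n : ℝ≥0∞) ^ ((α-1)*p) *
            ((A n) ^ (1/p) * (C1' * (n : ℝ≥0∞) ^ (1-β)) ^ (1/q)) ^ p := by
            exact mul_le_mul_right (ENNReal.rpow_le_rpow hS hp0.le) _
        _ = C1' ^ (p-1) * V n := by
            have hq2 : q⁻¹ * p = p - 1 := by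
              rw [inv_mul_eq_div, div_eq_iff (ne_of_gt hq0)]
              linear_combination -hqp
            have hexp : (α - 1) * p + (1 - β) * (p - 1) = -γ := by
              rw [hγdef, hβdef]
              linear_combination (-(α + ε)) * hqp
            rw [ENNReal.mul_rpow_of_nonneg _ _ hp0.le, ← ENNReal.rpow_mul,
              ← ENNReal.rpow_mul, one_div, one_div, inv_mul_cancel₀ (ne_of_gt hp0),
              ENNReal.rpow_one, hq2, ENNReal.mul_rpow_of_nonneg _ _ hp1,
              ← ENNReal.rpow_mul]
            simp only [hVdef]
            rw [if_pos hn1]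
            rw [show (n : ℝ≥0∞) ^ ((α-1)*p) * (A n * (C1' ^ (p-1) *
              (n : ℝ≥0∞) ^ ((1-β)*(p-1)))) = C1' ^ (p-1) *
              ((n : ℝ≥0∞) ^ ((α-1)*p) * (n : ℝ≥0∞) ^ ((1-β)*(p-1)) * A n) by ring,
              ← ENNReal.rpow_add _ _ hne hnt, hexp]
  -- sum the bound
  have hstep2 : ∑' n : ℕ, V n ≤ C3' * ∑' m : ℕ, (b m) ^ p := by
    set g : ℕ → ℕ → ℝ≥0∞ := fun n m =>
      (if 1 ≤ m ∧ m ≤ n then (n : ℝ≥0∞) ^ (-γ) else 0) *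
        ((b m) ^ p * (m : ℝ≥0∞) ^ (ε*p)) with hgdef
    have hVg : ∀ n, V n = ∑' m, g n m := by
      intro n
      have hsupp : ∀ m ∉ Finset.Icc 1 n, g n m = 0 := fun m hm => by
        rw [Finset.mem_Icc] at hm
        have hc : ¬(1 ≤ m ∧ m ≤ n) := by omega
        simp [hgdef, hc]
      rw [tsum_eq_sum hsupp]
      rcases Nat.eq_zero_or_pos n with rfl | hn
      · rw [show Finset.Icc 1 0 = (∅ : Finset ℕ) by simp]
        simp [hVdef]
      · simp only [hVdef, hAdef]
        rw [if_pos (show 1 ≤ n from hn), Finset.mul_sum]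
        refine Finset.sum_congr rfl fun m hm => ?_
        rw [Finset.mem_Icc] at hm
        simp only [hgdef]
        rw [if_pos ⟨hm.1, hm.2⟩]
    calc ∑' n, V n = ∑' n, ∑' m, g n m := tsum_congr hVg
      _ = ∑' m, ∑' n, g n m := ENNReal.tsum_comm
      _ ≤ ∑' m, C3' * (b m) ^ p := by
          refine ENNReal.tsum_le_tsum fun m => ?_
          rcases Nat.eq_zero_or_pos m with rfl | hm
          · have hz : ∀ n, g n 0 = 0 := fun n => by simp [hgdef]
            rw [tsum_congr hz]
            simp
          · have hme : (m : ℝ≥0∞) ≠ 0 := by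
              exact_mod_cast Nat.cast_ne_zero.2 (by omega)
            have hmt : (m : ℝ≥0∞) ≠ ⊤ := ENNReal.natCast_ne_top m
            have hfac : ∑' n, g n m
                = (∑' n, if m ≤ n then (n : ℝ≥0∞) ^ (-γ) else 0) *
                  ((b m) ^ p * (m : ℝ≥0∞) ^ (ε*p)) := by
              rw [← ENNReal.tsum_mul_right]
              refine tsum_congr fun n => ?_
              simp only [hgdef]
              congr 1
              by_cases h : m ≤ n
              · rw [if_pos ⟨hm, h⟩, if_pos h]
              · rw [if_neg (fun hc => h hc.2), if_neg h]
            rw [hfac]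
            calc (∑' n, if m ≤ n then (n : ℝ≥0∞) ^ (-γ) else 0) *
                  ((b m)^p * (m:ℝ≥0∞)^(ε*p))
                ≤ (C3' * (m : ℝ≥0∞) ^ (1-γ)) * ((b m)^p * (m:ℝ≥0∞)^(ε*p)) :=
                  mul_le_mul_left (hTail m hm) _
              _ = C3' * (b m) ^ p := by
                  rw [show (1:ℝ) - γ = -(ε*p) by rw [hγdef]; ring]
                  rw [show C3' * (m:ℝ≥0∞)^(-(ε*p)) * ((b m)^p * (m:ℝ≥0∞)^(ε*p))
                    = C3' * (b m)^p * ((m:ℝ≥0∞)^(-(ε*p)) * (m:ℝ≥0∞)^(ε*p)) by ring]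
                  rw [← ENNReal.rpow_add _ _ hme hmt]
                  simp
      _ = C3' * ∑' m, (b m) ^ p := ENNReal.tsum_mul_left
  calc ∑' n : ℕ, ((n : ℝ≥0∞) ^ ((α-1)*p) *
        (∑ m ∈ Finset.Icc 1 n, b m * (m : ℝ≥0∞) ^ (-α)) ^ p)
      ≤ ∑' n : ℕ, C1' ^ (p-1) * V n := ENNReal.tsum_le_tsum hpt
    _ = C1' ^ (p-1) * ∑' n : ℕ, V n := ENNReal.tsum_mul_left
    _ ≤ C1' ^ (p-1) * (C3' * ∑' m : ℕ, (b m) ^ p) := mul_le_mul_right hstep2 _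
    _ = C1' ^ (p-1) * C3' * ∑' m : ℕ, (b m) ^ p := by ring

/-- For `1 < p < ∞` and `α < 1/p'` (i.e. `α < 1 - 1/p`), the operator
`(G x)_n = (1/n^{1-α}) ∑_{m=1}^n x_m/m^α` is bounded from `ℓ^p` to `ℓ^p`. -/
theorem generalized_cesaro_bounded_lp (p α : ℝ) (hp : 1 < p) (hα : α < 1 - 1 / p) :
    ∃ K : ℝ, 0 < K ∧ ∀ x : ℕ → ℂ,
      Summable (fun m : ℕ => ‖x m‖ ^ p) →
      Summable (fun n : ℕ =>
        ‖(1 / (n : ℂ) ^ ((1 : ℂ) - α)) *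
          ∑ m ∈ Finset.Icc 1 n, x m / (m : ℂ) ^ (α : ℂ)‖ ^ p) ∧
      (∑' n : ℕ,
        ‖(1 / (n : ℂ) ^ ((1 : ℂ) - α)) *
          ∑ m ∈ Finset.Icc 1 n, x m / (m : ℂ) ^ (α : ℂ)‖ ^ p) ^ (1 / p) ≤
        K * (∑' m : ℕ, ‖x m‖ ^ p) ^ (1 / p) := by
  obtain ⟨K0, hK0top, hK0pos, hcore⟩ := core p α hp hα
  have hp0 : 0 < p := lt_trans one_pos hp
  refine ⟨K0.toReal ^ (1/p),
    Real.rpow_pos_of_pos (ENNReal.toReal_pos hK0pos.ne' hK0top) _, fun x hx => ?_⟩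
  set G : ℕ → ℂ := fun n => (1 / (n : ℂ) ^ ((1 : ℂ) - α)) *
      ∑ m ∈ Finset.Icc 1 n, x m / (m : ℂ) ^ (α : ℂ) with hGdef
  set b : ℕ → ℝ≥0∞ := fun m => (‖x m‖₊ : ℝ≥0∞) with hbdef
  -- rewrite the absolute values as coercions of nnnorms
  have hxfun : ∀ m, ‖x m‖ ^ p = ((‖x m‖₊ ^ p : ℝ≥0) : ℝ) := fun m => by
    rw [NNReal.coe_rpow, coe_nnnorm]
  have hGfun : ∀ n, ‖G n‖ ^ p = ((‖G n‖₊ ^ p : ℝ≥0) : ℝ) := fun n => by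
    rw [NNReal.coe_rpow, coe_nnnorm]
  -- summability of x-side in ℝ≥0∞
  have hxsum : ∑' m : ℕ, (b m) ^ p ≠ ⊤ := by
    have h1 : Summable (fun m => (‖x m‖₊ ^ p : ℝ≥0)) := by
      apply NNReal.summable_coe.1
      simpa only [← hxfun] using hx
    have h2 := ENNReal.tsum_coe_ne_top_iff_summable.2 h1
    have h3 : ∀ m : ℕ, ((‖x m‖₊ ^ p : ℝ≥0) : ℝ≥0∞) = (b m) ^ p := fun m =>
      ENNReal.coe_rpow_of_nonneg _ hp0.le
    rwa [tsum_congr h3] at h2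
  -- pointwise estimate
  have hpt : ∀ n : ℕ, ((‖G n‖₊ : ℝ≥0∞)) ^ p ≤ (n : ℝ≥0∞) ^ ((α-1)*p) *
      (∑ m ∈ Finset.Icc 1 n, b m * (m : ℝ≥0∞) ^ (-α)) ^ p := by
    intro n
    rcases Nat.eq_zero_or_pos n with rfl | hn
    · have : G 0 = 0 := by
        rw [hGdef]
        simp [show Finset.Icc 1 0 = (∅ : Finset ℕ) by simp]
      rw [this]
      simp [ENNReal.zero_rpow_of_pos hp0]
    · have hn1 : 1 ≤ n := hn
      have hnR : (0:ℝ) < n := by exact_mod_cast hn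
      have hnorm : ‖G n‖ ≤ (n:ℝ) ^ (α-1) *
          ∑ m ∈ Finset.Icc 1 n, ‖x m‖ * (m:ℝ) ^ (-α) := by
        rw [hGdef]
        simp only [norm_mul]
        have hcoef : ‖1 / (n : ℂ) ^ ((1 : ℂ) - α)‖ = (n:ℝ) ^ (α-1) := by
          rw [norm_div, norm_one, Complex.norm_natCast_cpow_of_pos hn]
          rw [show ((1 : ℂ) - (α:ℂ)).re = 1 - α by simp]
          rw [show (α - 1 : ℝ) = -(1-α) by ring, Real.rpow_neg hnR.le, one_div]
        rw [hcoef]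
        apply mul_le_mul_of_nonneg_left _ (Real.rpow_nonneg hnR.le _)
        refine le_trans (norm_sum_le _ _) (Finset.sum_le_sum fun m hm => ?_)
        have hm1 : 0 < m := (Finset.mem_Icc.1 hm).1
        rw [norm_div, Complex.norm_natCast_cpow_of_pos hm1,
          show ((α:ℂ)).re = α by simp, Real.rpow_neg (by positivity), div_eq_mul_inv]
      have hptnn : (‖G n‖₊ : ℝ≥0∞) ≤ (n : ℝ≥0∞) ^ (α-1) *
          ∑ m ∈ Finset.Icc 1 n, b m * (m : ℝ≥0∞) ^ (-α) := by
        rw [← enorm_eq_nnnorm, ← ofReal_norm]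
        calc ENNReal.ofReal ‖G n‖
            ≤ ENNReal.ofReal ((n:ℝ) ^ (α-1) *
              ∑ m ∈ Finset.Icc 1 n, ‖x m‖ * (m:ℝ) ^ (-α)) :=
              ENNReal.ofReal_le_ofReal hnorm
          _ = (n : ℝ≥0∞) ^ (α-1) *
              ∑ m ∈ Finset.Icc 1 n, b m * (m : ℝ≥0∞) ^ (-α) := by
              rw [ENNReal.ofReal_mul (Real.rpow_nonneg hnR.le _),
                natCast_rpow_ennreal n hn1,
                ENNReal.ofReal_sum_of_nonneg (fun m _ => by positivity)]
              congr 1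
              refine Finset.sum_congr rfl fun m hm => ?_
              rw [ENNReal.ofReal_mul (norm_nonneg _), ofReal_norm, enorm_eq_nnnorm,
                natCast_rpow_ennreal m (Finset.mem_Icc.1 hm).1]
      calc ((‖G n‖₊ : ℝ≥0∞)) ^ p
          ≤ ((n : ℝ≥0∞) ^ (α-1) *
            ∑ m ∈ Finset.Icc 1 n, b m * (m : ℝ≥0∞) ^ (-α)) ^ p :=
            ENNReal.rpow_le_rpow hptnn hp0.le
        _ = (n : ℝ≥0∞) ^ ((α-1)*p) *
            (∑ m ∈ Finset.Icc 1 n, b m * (m : ℝ≥0∞) ^ (-α)) ^ p := by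
            rw [ENNReal.mul_rpow_of_nonneg _ _ hp0.le, ← ENNReal.rpow_mul]
  -- main estimate in ℝ≥0∞
  set SG := ∑' n : ℕ, ((‖G n‖₊ : ℝ≥0∞)) ^ p with hSGdef
  set SX := ∑' m : ℕ, (b m) ^ p with hSXdef
  have hmain : SG ≤ K0 * SX := le_trans (ENNReal.tsum_le_tsum hpt) (hcore b)
  have hRHStop : K0 * SX ≠ ⊤ := ENNReal.mul_ne_top hK0top hxsum
  have hSGtop : SG ≠ ⊤ := ne_top_of_le_ne_top hRHStop hmain
  -- summability of the G-side
  have hGsummable : Summable (fun n : ℕ => ‖G n‖ ^ p) := by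
    have h1 : ∑' n : ℕ, ((‖G n‖₊ ^ p : ℝ≥0) : ℝ≥0∞) ≠ ⊤ := by
      have h3 : ∀ n : ℕ, ((‖G n‖₊ ^ p : ℝ≥0) : ℝ≥0∞) = ((‖G n‖₊ : ℝ≥0∞)) ^ p := fun n =>
        ENNReal.coe_rpow_of_nonneg _ hp0.le
      rwa [tsum_congr h3]
    have h2 := ENNReal.tsum_coe_ne_top_iff_summable.1 h1
    simpa only [← hGfun] using NNReal.summable_coe.2 h2
  refine ⟨hGsummable, ?_⟩
  -- identify the real tsums with toReal of the ℝ≥0∞ tsums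
  have hGtsum : ∑' n : ℕ, ‖G n‖ ^ p = SG.toReal := by
    rw [hSGdef, ENNReal.tsum_toReal_eq (fun n =>
      ENNReal.rpow_ne_top_of_nonneg hp0.le (ENNReal.coe_ne_top))]
    refine tsum_congr fun n => ?_
    rw [← ENNReal.toReal_rpow, ENNReal.coe_toReal, coe_nnnorm]
  have hXtsum : ∑' m : ℕ, ‖x m‖ ^ p = SX.toReal := by
    rw [hSXdef, ENNReal.tsum_toReal_eq (fun m =>
      ENNReal.rpow_ne_top_of_nonneg hp0.le (ENNReal.coe_ne_top))]
    refine tsum_congr fun m => ?_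
    rw [← ENNReal.toReal_rpow, ENNReal.coe_toReal, coe_nnnorm]
  rw [hGtsum, hXtsum]
  -- conclude
  have hfin : SG ^ (1/p) ≤ K0 ^ (1/p) * SX ^ (1/p) := by
    calc SG ^ (1/p) ≤ (K0 * SX) ^ (1/p) := ENNReal.rpow_le_rpow hmain (by positivity)
      _ = K0 ^ (1/p) * SX ^ (1/p) := ENNReal.mul_rpow_of_nonneg _ _ (by positivity)
  have hne : K0 ^ (1/p) * SX ^ (1/p) ≠ ⊤ :=
    ENNReal.mul_ne_top (ENNReal.rpow_ne_top_of_nonneg (by positivity) hK0top)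
      (ENNReal.rpow_ne_top_of_nonneg (by positivity) hxsum)
  have := ENNReal.toReal_mono hne hfin
  rwa [ENNReal.toReal_mul, ← ENNReal.toReal_rpow, ← ENNReal.toReal_rpow,
    ← ENNReal.toReal_rpow] at this
end

section
/- Let λ ∈ ℂ with λ ∉ {0} ∪ {1/n : n ∈ ℕ} and suppose α := Re(1/λ) < 1. Then there exists a constant β(λ) > 0 such that for all positive integers m < n, |1/(n ∏_{k=m}^n (1 - 1/(kλ)))| ≤ β(λ)/(n^{1-α} m^α). -/
lemma prod_ratio (m : ℕ) : ∀ n : ℕ, m ≤ n →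
    ∏ k ∈ Finset.Icc m n, ((k:ℝ)/(k+1)) = (m:ℝ)/(n+1) := by
  intro n
  induction n with
  | zero => intro h; interval_cases m; simp
  | succ n ih =>
    intro h
    rcases Nat.lt_or_ge m (n+1) with h'|h'
    · rw [Finset.prod_Icc_succ_top (by omega), ih (by omega)]
      have h1 : (n:ℝ)+1 ≠ 0 := by positivity
      push_cast
      field_simp
    · have : m = n+1 := by omega
      subst this; simp

lemma sum_inv_sq (m : ℕ) (hm : 1 ≤ m) : ∀ n : ℕ, m ≤ n →
    ∑ k ∈ Finset.Icc m n, (1:ℝ)/(k:ℝ)^2 ≤ 2/m - 2/(n+1) := by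
  intro n
  induction n with
  | zero => intro h; omega
  | succ n ih =>
    intro h
    rcases Nat.lt_or_ge m (n+1) with h'|h'
    · rw [Finset.sum_Icc_succ_top (by omega)]
      have h2 := ih (by omega)
      have hn1 : (0:ℝ) < (n:ℝ)+1 := by positivity
      have key : (1:ℝ)/((n:ℝ)+1)^2 ≤ 2/((n:ℝ)+1) - 2/((n:ℝ)+2) := by
        rw [div_sub_div _ _ (by positivity) (by positivity), div_le_div_iff₀ (by positivity) (by positivity)]
        nlinarith [hn1]
      have heq : (2:ℝ)/((n:ℝ)+1+1) = 2/((n:ℝ)+2) := by ring_nf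
      push_cast
      push_cast at h2
      linarith
    · have hme : m = n+1 := by omega
      subst hme
      simp only [Finset.Icc_self, Finset.sum_singleton]
      have hm1 : (0:ℝ) < ((n:ℝ)+1) := by positivity
      push_cast
      rw [div_sub_div _ _ (by positivity) (by positivity), div_le_div_iff₀ (by positivity) (by positivity)]
      nlinarith [hm1]

noncomputable def Econst (α c : ℝ) : ℝ :=
  (c + 4*α^2 + 2 * |α| * c)/(min 1 ((1-α)^2)) + 2 * |α|

lemma Econst_nonneg (α c : ℝ) (hc : α^2 ≤ c) (hα1 : α < 1) : 0 ≤ Econst α c := by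
  have hc0 : 0 ≤ c := le_trans (sq_nonneg α) hc
  have hd : 0 < min 1 ((1-α)^2) := lt_min one_pos (pow_pos (by linarith) 2)
  have h1 : 0 ≤ (c + 4*α^2 + 2 * |α| * c) := by positivity
  unfold Econst
  exact add_nonneg (div_nonneg h1 hd.le) (by positivity)

lemma key_ineq (α c : ℝ) (hc : α^2 ≤ c) (hα1 : α < 1) (x : ℝ) (hx0 : 0 < x) (hx1 : x ≤ 1) :
    Real.exp (-(Econst α c) * x^2) * (1+x) ^ (-(2*α)) ≤ 1 - 2*α*x + c*x^2 := by
  have hc0 : 0 ≤ c := le_trans (sq_nonneg α) hc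
  set d : ℝ := min 1 ((1-α)^2) with hdef
  have hd : 0 < d := lt_min one_pos (pow_pos (by linarith) 2)
  set A : ℝ := 1 - 2*α*x + c*x^2 with hAdef
  have hdA : d ≤ A := by
    have h1 : (1-α*x)^2 ≤ A := by nlinarith [sq_nonneg x]
    rcases le_total α 0 with h|h
    · have : (1:ℝ) ≤ (1-α*x)^2 := by nlinarith [mul_nonpos_of_nonpos_of_nonneg h hx0.le]
      calc d ≤ 1 := min_le_left _ _
        _ ≤ A := le_trans this h1
    · have h2 : (1-α)^2 ≤ (1-α*x)^2 := by
        nlinarith [mul_nonneg h (sub_nonneg.mpr hx1), mul_nonneg (mul_nonneg h h) hx0.le]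
      calc d ≤ (1-α)^2 := min_le_right _ _
        _ ≤ A := le_trans h2 h1
  have hApos : 0 < A := lt_of_lt_of_le hd hdA
  have h1x : (0:ℝ) < 1 + x := by linarith
  rw [Real.rpow_def_of_pos h1x, ← Real.exp_add, ← Real.exp_log hApos, Real.exp_le_exp]
  have hlogA : (A - 1)/A ≤ Real.log A := by
    have h := Real.log_le_sub_one_of_pos (inv_pos.mpr hApos)
    rw [Real.log_inv] at h
    have h2 : 1 - A⁻¹ ≤ Real.log A := by linarith
    calc (A-1)/A = 1 - A⁻¹ := by field_simp
      _ ≤ Real.log A := h2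
  have hub : Real.log (1+x) ≤ x := by
    have := Real.log_le_sub_one_of_pos h1x; linarith
  have hlb : x - x^2 ≤ Real.log (1+x) := by
    have h := Real.log_le_sub_one_of_pos (inv_pos.mpr h1x)
    rw [Real.log_inv] at h
    have h2 : 1 - (1+x)⁻¹ ≤ Real.log (1+x) := by linarith
    have hinv : (1+x)⁻¹ * (1+x) = 1 := inv_mul_cancel₀ (ne_of_gt h1x)
    have h3 : x - x^2 ≤ 1 - (1+x)⁻¹ := by
      nlinarith [inv_pos.mpr h1x, mul_pos hx0 (mul_pos hx0 hx0)]
    linarith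
  -- 2α·log(1+x) ≥ 2αx - 2|α|x²
  have hlog2 : 2*α*x - 2 * |α| * x^2 ≤ Real.log (1+x) * (2*α) := by
    rcases le_total 0 α with h|h
    · rw [abs_of_nonneg h]; nlinarith
    · rw [abs_of_nonpos h]; nlinarith
  -- main estimate
  have hM : -(c + 4*α^2 + 2 * |α| * c) ≤ c - 4*α^2 + 2*α*c*x := by
    rcases le_total 0 α with h|h
    · rw [abs_of_nonneg h]
      nlinarith [mul_nonneg (mul_nonneg h hc0) hx0.le]
    · rw [abs_of_nonpos h]
      nlinarith [mul_nonneg (mul_nonneg (neg_nonneg.mpr h) hc0) (sub_nonneg.mpr hx1)]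
  have hfrac : -((c + 4*α^2 + 2 * |α| * c)/d) * x^2 ≤ (A-1)/A + 2*α*x := by
    have heq : (A-1)/A + 2*α*x = (c - 4*α^2 + 2*α*c*x) * x^2 / A := by
      field_simp
      ring
    rw [heq]
    set M := c + 4*α^2 + 2 * |α| * c with hMdef
    have hM0 : 0 ≤ M := by positivity
    have step1 : -(M * x^2) / A ≤ (c - 4*α^2 + 2*α*c*x) * x^2 / A := by
      gcongr
      nlinarith [sq_nonneg x]
    have step2 : -(M/d) * x^2 ≤ -(M * x^2) / A := by
      have h' : M * x^2 / A ≤ M * x^2 / d := by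
        gcongr
      have e1 : -(M/d) * x^2 = -(M * x^2 / d) := by ring
      have e2 : -(M * x^2) / A = -(M * x^2 / A) := by ring
      linarith
    linarith
  show -(Econst α c) * x^2 + Real.log (1+x) * (-(2*α)) ≤ Real.log A
  have hE : Econst α c = (c + 4*α^2 + 2 * |α| * c)/d + 2 * |α| := rfl
  rw [hE]
  linarith

lemma normSq_factor (lam : ℂ) (k : ℕ) :
    Complex.normSq (1 - 1/((k:ℂ) * lam)) =
      1 - 2*((1/lam).re)*(1/(k:ℝ)) + (((1/lam).re)^2 + ((1/lam).im)^2)*(1/(k:ℝ))^2 := by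
  have h1 : (1:ℂ)/((k:ℂ) * lam) = (((1:ℝ)/(k:ℝ) : ℝ) : ℂ) * (1/lam) := by
    push_cast
    rw [one_div, mul_inv, one_div, one_div, mul_comm]
  rw [h1]
  simp [Complex.normSq_apply, Complex.sub_re, Complex.sub_im, Complex.mul_re, Complex.mul_im,
    Complex.ofReal_re, Complex.ofReal_im, Complex.one_re, Complex.one_im]
  ring

/-- Let `λ ∉ {0} ∪ {1/n : n ≥ 1}` with `α := Re(1/λ) < 1`. Then there is `β > 0` such
that for all positive integers `m < n`,
`|1/(n ∏_{k=m}^n (1 - 1/(kλ)))| ≤ β/(n^{1-α} m^α)`. -/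
theorem entry_bound_of_re_lt_one (lam : ℂ) (hlam0 : lam ≠ 0)
    (hlam : ∀ k : ℕ, 1 ≤ k → lam ≠ 1 / (k : ℂ))
    (α : ℝ) (hα : α = (1 / lam).re) (hα1 : α < 1) :
    ∃ β : ℝ, 0 < β ∧ ∀ m n : ℕ, 1 ≤ m → m < n →
      ‖(1 / (n * ∏ k ∈ Finset.Icc m n, (1 - 1 / (k * lam))) : ℂ)‖ ≤
        β / ((n : ℝ) ^ (1 - α) * (m : ℝ) ^ α) := by
  obtain ⟨c, hcdef⟩ : ∃ c : ℝ, c = α^2 + ((1/lam).im)^2 := ⟨_, rfl⟩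
  have hc : α^2 ≤ c := by rw [hcdef]; nlinarith [sq_nonneg ((1/lam).im)]
  obtain ⟨E, hEdef⟩ : ∃ E : ℝ, E = Econst α c := ⟨_, rfl⟩
  have hE0 : 0 ≤ E := hEdef ▸ Econst_nonneg α c hc hα1
  obtain ⟨K, hKdef⟩ : ∃ K : ℝ, K = (2:ℝ)^α + 1 := ⟨_, rfl⟩
  have hK0 : 0 < K := by
    have := Real.rpow_pos_of_pos (by norm_num : (0:ℝ) < 2) α
    rw [hKdef]; linarith
  refine ⟨Real.exp E * K, by positivity, ?_⟩
  intro m n hm hmn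
  have hmn' : m ≤ n := hmn.le
  have hm0 : (0:ℝ) < (m:ℝ) := by exact_mod_cast hm
  have hn0 : (0:ℝ) < (n:ℝ) := by exact_mod_cast (lt_of_lt_of_le (by omega : 0 < m) hmn')
  have hn1 : (0:ℝ) < (n:ℝ) + 1 := by positivity
  -- pointwise bound on normSq factors
  have hpoint : ∀ k ∈ Finset.Icc m n,
      Real.exp (-E * (1/(k:ℝ)^2)) * ((k:ℝ)/((k:ℝ)+1)) ^ (2*α)
        ≤ Complex.normSq (1 - 1/((k:ℂ) * lam)) := by
    intro k hk
    have hk1 : 1 ≤ k := le_trans hm (Finset.mem_Icc.1 hk).1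
    have hk0 : (0:ℝ) < (k:ℝ) := by exact_mod_cast hk1
    have hx0 : (0:ℝ) < 1/(k:ℝ) := by positivity
    have hx1 : 1/(k:ℝ) ≤ 1 := by
      rw [div_le_one hk0]; exact_mod_cast hk1
    have hkey := key_ineq α c hc hα1 (1/(k:ℝ)) hx0 hx1
    have hb : ((k:ℝ)/((k:ℝ)+1)) ^ (2*α) = (1 + 1/(k:ℝ)) ^ (-(2*α)) := by
      rw [Real.rpow_neg (by positivity), ← Real.inv_rpow (by positivity)]
      congr 1
      field_simp
    have hx2 : (1/(k:ℝ))^2 = 1/(k:ℝ)^2 := by ring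
    rw [← hEdef] at hkey
    rw [normSq_factor lam k, ← hα, hb, ← hx2, ← hcdef]
    exact hkey
  -- product lower bound
  obtain ⟨P, hPdef⟩ : ∃ P : ℂ, P = ∏ k ∈ Finset.Icc m n, (1 - 1/((k:ℂ) * lam)) := ⟨_, rfl⟩
  have hsq : (‖P‖)^2 = ∏ k ∈ Finset.Icc m n, Complex.normSq (1 - 1/((k:ℂ) * lam)) := by
    rw [hPdef, norm_prod, ← Finset.prod_pow]
    simp [Complex.sq_norm]
  have hprod1 : ∏ k ∈ Finset.Icc m n,
      (Real.exp (-E * (1/(k:ℝ)^2)) * ((k:ℝ)/((k:ℝ)+1)) ^ (2*α))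
        ≤ ∏ k ∈ Finset.Icc m n, Complex.normSq (1 - 1/((k:ℂ) * lam)) := by
    apply Finset.prod_le_prod
    · intro k hk; positivity
    · exact hpoint
  have hsplit : ∏ k ∈ Finset.Icc m n,
      (Real.exp (-E * (1/(k:ℝ)^2)) * ((k:ℝ)/((k:ℝ)+1)) ^ (2*α))
      = Real.exp (-E * ∑ k ∈ Finset.Icc m n, 1/(k:ℝ)^2)
        * ((m:ℝ)/((n:ℝ)+1)) ^ (2*α) := by
    rw [Finset.prod_mul_distrib, ← Real.exp_sum, ← Finset.mul_sum]
    congr 1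
    rw [Real.finset_prod_rpow _ _ (fun k _ => by positivity)]
    congr 1
    exact prod_ratio m n hmn'
  have hS : ∑ k ∈ Finset.Icc m n, (1:ℝ)/(k:ℝ)^2 ≤ 2 := by
    have h1 := sum_inv_sq m hm n hmn'
    have h2 : (2:ℝ)/(m:ℝ) ≤ 2 := by
      rw [div_le_iff₀ hm0]; nlinarith [hm0, (by exact_mod_cast hm : (1:ℝ) ≤ (m:ℝ))]
    have h3 : (0:ℝ) ≤ 2/((n:ℝ)+1) := by positivity
    linarith
  have hexpS : Real.exp (-(2*E)) ≤ Real.exp (-E * ∑ k ∈ Finset.Icc m n, 1/(k:ℝ)^2) := by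
    apply Real.exp_le_exp.2
    nlinarith
  have hlow : Real.exp (-(2*E)) * ((m:ℝ)/((n:ℝ)+1)) ^ (2*α) ≤ (‖P‖)^2 := by
    rw [hsq]
    calc Real.exp (-(2*E)) * ((m:ℝ)/((n:ℝ)+1)) ^ (2*α)
        ≤ Real.exp (-E * ∑ k ∈ Finset.Icc m n, 1/(k:ℝ)^2) * ((m:ℝ)/((n:ℝ)+1)) ^ (2*α) := by
          apply mul_le_mul_of_nonneg_right hexpS (by positivity)
      _ = _ := hsplit.symm
      _ ≤ _ := hprod1
  -- lower bound L for abs P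
  obtain ⟨L, hLdef⟩ : ∃ L : ℝ, L = Real.exp (-E) * ((m:ℝ)/((n:ℝ)+1)) ^ α := ⟨_, rfl⟩
  have hL : 0 < L := by
    rw [hLdef]
    exact mul_pos (Real.exp_pos _) (Real.rpow_pos_of_pos (div_pos hm0 hn1) _)
  have hL2 : L^2 = Real.exp (-(2*E)) * ((m:ℝ)/((n:ℝ)+1)) ^ (2*α) := by
    rw [hLdef]
    have e1 : (Real.exp (-E))^2 = Real.exp (-(2*E)) := by
      rw [sq, ← Real.exp_add]; ring_nf
    have e2 : (((m:ℝ)/((n:ℝ)+1)) ^ α)^2 = ((m:ℝ)/((n:ℝ)+1)) ^ (2*α) := by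
      rw [sq, ← Real.rpow_add (div_pos hm0 hn1)]; ring_nf
    rw [mul_pow, e1, e2]
  have habs : L ≤ ‖P‖ := by
    have h2 : L^2 ≤ (‖P‖)^2 := by rw [hL2]; exact hlow
    have h3 := Real.sqrt_le_sqrt h2
    rwa [Real.sqrt_sq hL.le, Real.sqrt_sq (norm_nonneg P)] at h3
  -- final computation
  rw [← hPdef, norm_div, norm_one, norm_mul, Complex.norm_natCast]
  obtain ⟨a, hadef⟩ : ∃ a : ℝ, a = (n:ℝ)^(1-α) := ⟨_, rfl⟩
  obtain ⟨b, hbdef⟩ : ∃ b : ℝ, b = (m:ℝ)^α := ⟨_, rfl⟩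
  obtain ⟨q, hqdef⟩ : ∃ q : ℝ, q = ((n:ℝ)+1)^α := ⟨_, rfl⟩
  obtain ⟨r, hrdef⟩ : ∃ r : ℝ, r = (n:ℝ)^α := ⟨_, rfl⟩
  rw [← hadef, ← hbdef]
  have ha : 0 < a := hadef ▸ Real.rpow_pos_of_pos hn0 _
  have hb : 0 < b := hbdef ▸ Real.rpow_pos_of_pos hm0 _
  have hq : 0 < q := hqdef ▸ Real.rpow_pos_of_pos hn1 _
  have hr : 0 < r := hrdef ▸ Real.rpow_pos_of_pos hn0 _
  have f1 : a * r = (n:ℝ) := by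
    rw [hadef, hrdef, ← Real.rpow_add hn0]; norm_num
  have f2 : ((m:ℝ)/((n:ℝ)+1)) ^ α = b / q := by
    rw [hbdef, hqdef]; exact Real.div_rpow hm0.le hn1.le α
  have f3 : q ≤ K * r := by
    have hdr : q / r = (((n:ℝ)+1)/(n:ℝ))^α := by
      rw [hqdef, hrdef]; exact (Real.div_rpow hn1.le hn0.le α).symm
    have hn01 : (1:ℝ) ≤ (n:ℝ) := by exact_mod_cast Nat.one_le_iff_ne_zero.mpr (by omega)
    have hbase : ((n:ℝ)+1)/(n:ℝ) ≤ 2 := by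
      rw [div_le_iff₀ hn0]; linarith
    have h1base : 1 ≤ ((n:ℝ)+1)/(n:ℝ) := by
      rw [le_div_iff₀ hn0]; linarith
    have hratio : (((n:ℝ)+1)/(n:ℝ))^α ≤ K := by
      rcases le_or_gt 0 α with h|h
      · have := Real.rpow_le_rpow (by positivity) hbase h
        rw [hKdef]; linarith
      · have := Real.rpow_le_one_of_one_le_of_nonpos h1base h.le
        have h2pos := Real.rpow_pos_of_pos (by norm_num : (0:ℝ) < 2) α
        rw [hKdef]; linarith
    have h4 : q / r ≤ K := by rw [hdr]; exact hratio
    calc q = (q/r) * r := by field_simp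
      _ ≤ K * r := mul_le_mul_of_nonneg_right h4 hr.le
  calc (1:ℝ) / ((n:ℝ) * ‖P‖) ≤ 1 / ((n:ℝ) * L) := by
        apply one_div_le_one_div_of_le (by positivity)
        exact mul_le_mul_of_nonneg_left habs hn0.le
    _ ≤ Real.exp E * K / (a * b) := by
        rw [div_le_div_iff₀ (by positivity) (by positivity)]
        have hBL : Real.exp E * K * ((n:ℝ) * L) = K * (n:ℝ) * b / q := by
          rw [hLdef, f2]
          have hexp : Real.exp E * Real.exp (-E) = 1 := by
            rw [← Real.exp_add]; simp
          calc Real.exp E * K * ((n:ℝ) * (Real.exp (-E) * (b/q)))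
              = (Real.exp E * Real.exp (-E)) * (K * ((n:ℝ) * (b/q))) := by ring
            _ = K * ((n:ℝ) * (b/q)) := by rw [hexp, one_mul]
            _ = K * (n:ℝ) * b / q := by ring
        rw [hBL, one_mul, le_div_iff₀ hq]
        calc a * b * q ≤ a * b * (K * r) := mul_le_mul_of_nonneg_left f3 (by positivity)
          _ = K * (a * r) * b := by ring
          _ = K * (n:ℝ) * b := by rw [f1]
end

section
/- The n-th row entries of the inverse (C - λI)^{-1} on ℂ^ℕ satisfy the recursive/product formula: for λ ∉ {0} ∪ {1/k : k ∈ ℕ}, the lower triangular matrix R with R_{nn} = 1/(1/n - λ), R_{nm} = -1/(n λ² ∏_{k=m}^n (1 - 1/(kλ))) for 1 ≤ m < n, and R_{nm} = 0 for m > n, satisfies (C - λI) ∘ T_R = Id = T_R ∘ (C - λI) as operators on ℂ^ℕ. -/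
private noncomputable def cesPP (lam : ℂ) (m n : ℕ) : ℂ :=
  ∏ k ∈ Finset.Icc (m + 1) (n + 1), (1 - 1 / ((k : ℂ) * lam))

private lemma ces_b_ne (lam : ℂ) (hlam0 : lam ≠ 0)
    (hlam : ∀ k : ℕ, 1 ≤ k → lam ≠ 1 / (k : ℂ)) (k : ℕ) (hk : 1 ≤ k) :
    (1 : ℂ) - 1 / ((k : ℂ) * lam) ≠ 0 := by
  have hk0 : (k : ℂ) ≠ 0 := Nat.cast_ne_zero.mpr (by omega)
  intro h
  apply hlam k hk
  field_simp at h ⊢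
  linear_combination h

private lemma cesPP_ne (lam : ℂ) (hlam0 : lam ≠ 0)
    (hlam : ∀ k : ℕ, 1 ≤ k → lam ≠ 1 / (k : ℂ)) (m n : ℕ) :
    cesPP lam m n ≠ 0 := by
  refine Finset.prod_ne_zero_iff.mpr ?_
  intro k hk
  exact ces_b_ne lam hlam0 hlam k (by simp [Finset.mem_Icc] at hk; omega)

private lemma cesPP_top (lam : ℂ) (m n : ℕ) (h : m ≤ n + 1) :
    cesPP lam m (n + 1) = cesPP lam m n * (1 - 1 / (((n : ℂ) + 2) * lam)) := by
  unfold cesPP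
  rw [Finset.prod_Icc_succ_top (by omega)]
  congr 1
  push_cast
  ring

private lemma cesPP_bot (lam : ℂ) (m n : ℕ) (h : m ≤ n) :
    cesPP lam m n = (1 - 1 / (((m : ℂ) + 1) * lam)) * cesPP lam (m + 1) n := by
  unfold cesPP
  rw [← Finset.Ico_add_one_right_eq_Icc, Finset.prod_eq_prod_Ico_succ_bot (by omega), Finset.Ico_add_one_right_eq_Icc]
  congr 1
  push_cast
  ring

private lemma cesPP_diag (lam : ℂ) (n : ℕ) :
    cesPP lam n n = 1 - 1 / (((n : ℂ) + 1) * lam) := by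
  unfold cesPP
  rw [Finset.Icc_self, Finset.prod_singleton]
  push_cast
  ring

private lemma ces_frac (lam X : ℂ) (hX : X ≠ 0) (hlam0 : lam ≠ 0) :
    (1 : ℂ) - 1 / (X * lam) = (X * lam - 1) / (X * lam) := by
  field_simp

private lemma ces_frac_ne (lam X : ℂ) (hX : X ≠ 0) (hlam0 : lam ≠ 0)
    (h : (1 : ℂ) - 1 / (X * lam) ≠ 0) : X * lam - 1 ≠ 0 := by
  intro h0
  exact h (by rw [ces_frac lam X hX hlam0, h0, zero_div])

private lemma cesPP_top' (lam : ℂ) (hlam0 : lam ≠ 0) (m n : ℕ) (h : m ≤ n + 1) :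
    cesPP lam m (n + 1)
      = cesPP lam m n * ((((n : ℂ) + 2) * lam - 1) / (((n : ℂ) + 2) * lam)) := by
  have hN : ((n : ℂ) + 2) ≠ 0 := by exact_mod_cast (by omega : n + 2 ≠ 0)
  rw [cesPP_top lam m n h, ces_frac lam _ hN hlam0]

private lemma cesPP_bot' (lam : ℂ) (hlam0 : lam ≠ 0) (m n : ℕ) (h : m ≤ n) :
    cesPP lam m n
      = ((((m : ℂ) + 1) * lam - 1) / (((m : ℂ) + 1) * lam)) * cesPP lam (m + 1) n := by
  have hM : ((m : ℂ) + 1) ≠ 0 := Nat.cast_add_one_ne_zero m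
  rw [cesPP_bot lam m n h, ces_frac lam _ hM hlam0]

private lemma cesPP_diag' (lam : ℂ) (hlam0 : lam ≠ 0) (n : ℕ) :
    cesPP lam n n = (((n : ℂ) + 1) * lam - 1) / (((n : ℂ) + 1) * lam) := by
  have hN : ((n : ℂ) + 1) ≠ 0 := Nat.cast_add_one_ne_zero n
  rw [cesPP_diag, ces_frac lam _ hN hlam0]

private lemma ces_alg1 (lam A nn : ℂ) (hA : A ≠ 0) (hl : lam ≠ 0) (hn : nn ≠ 0)
    (hb1 : nn * lam - 1 ≠ 0) :
    -1/(lam*A) + -1/(nn*lam^2*(A*((nn*lam-1)/(nn*lam)))) = -1/(lam*(A*((nn*lam-1)/(nn*lam)))) := by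
  have e2 : nn*lam^2*(A*((nn*lam-1)/(nn*lam))) = lam*(A*(nn*lam-1)) := by field_simp
  have e3 : lam*(A*((nn*lam-1)/(nn*lam))) = lam*(A*(nn*lam-1))/(nn*lam) := by field_simp
  rw [e2, e3]
  have hD : lam*(A*(nn*lam-1)) ≠ 0 := mul_ne_zero hl (mul_ne_zero hA hb1)
  field_simp
  have hb2 : -1 + lam * nn ≠ 0 := by intro h; apply hb1; linear_combination h
  linear_combination mul_inv_cancel₀ hb2

private lemma ces_alg2 (lam Q mm nn : ℂ) (hQ : Q ≠ 0) (hl : lam ≠ 0) (hm : mm ≠ 0)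
    (hn : nn ≠ 0) (hb1 : mm * lam - 1 ≠ 0) :
    -1/(nn*lam^2*(((mm*lam-1)/(mm*lam))*Q))/mm + -1/(nn*lam*Q)
      = -1/(nn*lam*(((mm*lam-1)/(mm*lam))*Q)) := by
  have e1 : nn*lam^2*(((mm*lam-1)/(mm*lam))*Q) = nn*lam*((mm*lam-1)*Q)/mm := by field_simp
  have e2 : nn*lam*(((mm*lam-1)/(mm*lam))*Q) = nn*((mm*lam-1)*Q)/mm := by field_simp
  rw [e1, e2]
  have hD : nn*lam*((mm*lam-1)*Q) ≠ 0 := mul_ne_zero (mul_ne_zero hn hl) (mul_ne_zero hb1 hQ)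
  have hD2 : nn*((mm*lam-1)*Q) ≠ 0 := mul_ne_zero hn (mul_ne_zero hb1 hQ)
  field_simp
  have hb2 : -1 + lam * mm ≠ 0 := by intro h; apply hb1; linear_combination h
  linear_combination mul_inv_cancel₀ hb2

private lemma ces_alg3 (lam P nn : ℂ) (hP : P ≠ 0) (hl : lam ≠ 0) (hn : nn ≠ 0) :
    -1/(lam*P)/nn = -1/(nn*lam*P) := by field_simp

private lemma ces_alg4 (lam nn : ℂ) (hl : lam ≠ 0) (hn : nn ≠ 0) (hb1 : nn*lam - 1 ≠ 0) :
    (1/nn) * (-1/(lam*((nn*lam-1)/(nn*lam)))) - lam * (-1/(lam*((nn*lam-1)/(nn*lam)))) = 1 := by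
  have e : lam*((nn*lam-1)/(nn*lam)) = (nn*lam-1)/nn := by field_simp
  rw [e]; field_simp; ring

private lemma ces_alg5 (lam P nn : ℂ) (hP : P ≠ 0) (hl : lam ≠ 0) (hn : nn ≠ 0) :
    (1/nn) * (-1/(lam*P)) - lam * (-1/(nn*lam^2*P)) = 0 := by field_simp; ring

private lemma ces_alg6 (lam nn : ℂ) (hl : lam ≠ 0) (hn : nn ≠ 0) (hb1 : nn*lam - 1 ≠ 0) :
    -1/(nn*lam*((nn*lam-1)/(nn*lam))) - lam*(-1/(lam*((nn*lam-1)/(nn*lam)))) = 1 := by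
  have e : nn*lam*((nn*lam-1)/(nn*lam)) = nn*lam-1 := by field_simp
  have e2 : lam*((nn*lam-1)/(nn*lam)) = (nn*lam-1)/nn := by field_simp
  rw [e, e2]; field_simp; ring

private lemma ces_alg7 (lam P nn : ℂ) (hP : P ≠ 0) (hl : lam ≠ 0) (hn : nn ≠ 0) :
    -1/(nn*lam*P) - lam*(-1/(nn*lam^2*P)) = 0 := by field_simp; ring

private lemma ces_tri_swap (n : ℕ) (f : ℕ → ℕ → ℂ) :
    ∑ k ∈ Finset.range (n + 1), ∑ m ∈ Finset.range (k + 1), f k m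
      = ∑ m ∈ Finset.range (n + 1), ∑ k ∈ Finset.Ico m (n + 1), f k m := by
  simp only [Finset.range_eq_Ico]
  exact (Finset.sum_Ico_Ico_comm 0 (n + 1) fun m k => f k m).symm

section
variable (lam : ℂ) (hlam0 : lam ≠ 0) (hlam : ∀ k : ℕ, 1 ≤ k → lam ≠ 1 / (k : ℂ))
  (R : ℕ → ℕ → ℂ)
  (hRdiag : ∀ n : ℕ, R n n = 1 / (1 / ((n : ℂ) + 1) - lam))
  (hRlow : ∀ m n : ℕ, m < n →
    R n m = -1 / (((n : ℂ) + 1) * lam ^ 2 *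
      ∏ k ∈ Finset.Icc (m + 1) (n + 1), (1 - 1 / (k * lam))))

include hRlow in
private lemma ces_Rlow' (m n : ℕ) (h : m < n) :
    R n m = -1 / (((n : ℂ) + 1) * lam ^ 2 * cesPP lam m n) := by
  rw [hRlow m n h]; rfl

include hlam0 hRdiag in
private lemma ces_Rdiag' (n : ℕ) :
    R n n = -1 / (lam * cesPP lam n n) := by
  rw [hRdiag n, cesPP_diag]
  have hN : ((n : ℂ) + 1) ≠ 0 := Nat.cast_add_one_ne_zero n
  have hAB : lam * (1 - 1 / (((n : ℂ) + 1) * lam)) = -(1 / ((n : ℂ) + 1) - lam) := by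
    field_simp
    ring
  rw [hAB, div_neg, neg_div, neg_neg]

include hlam0 hlam hRdiag hRlow in
private lemma ces_colSum (n m : ℕ) (h : m ≤ n) :
    ∑ j ∈ Finset.Ico m (n + 1), R j m = -1 / (lam * cesPP lam m n) := by
  induction n, h using Nat.le_induction with
  | base =>
    rw [show Finset.Ico m (m + 1) = {m} by rw [Finset.Ico_add_one_right_eq_Icc, Finset.Icc_self],
      Finset.sum_singleton]
    exact ces_Rdiag' lam hlam0 R hRdiag m
  | succ n hn ih =>
    rw [Finset.sum_Ico_succ_top (by omega), ih,
      ces_Rlow' lam R hRlow m (n + 1) (by omega),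
      cesPP_top' lam hlam0 m n (by omega)]
    have hA : cesPP lam m n ≠ 0 := cesPP_ne lam hlam0 hlam m n
    have hN : ((n : ℂ) + 2) ≠ 0 := by exact_mod_cast (by omega : n + 2 ≠ 0)
    have hb : (1 : ℂ) - 1 / (((n : ℂ) + 2) * lam) ≠ 0 := by
      have := ces_b_ne lam hlam0 hlam (n + 2) (by omega); push_cast at this
      exact this
    have hb1 : ((n : ℂ) + 2) * lam - 1 ≠ 0 := ces_frac_ne lam _ hN hlam0 hb
    rw [show ((n + 1 : ℕ) : ℂ) + 1 = (n : ℂ) + 2 by push_cast; ring]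
    exact ces_alg1 lam _ _ hA hlam0 hN hb1

include hlam0 hlam hRdiag hRlow in
private lemma ces_rowSum_aux (n : ℕ) :
    ∀ d m : ℕ, m + d = n →
      ∑ j ∈ Finset.Ico m (n + 1), R n j / ((j : ℂ) + 1)
        = -1 / (((n : ℂ) + 1) * lam * cesPP lam m n) := by
  intro d
  induction d with
  | zero =>
    intro m hm
    obtain rfl : m = n := by omega
    rw [show Finset.Ico m (m + 1) = {m} by rw [Finset.Ico_add_one_right_eq_Icc, Finset.Icc_self],
      Finset.sum_singleton, ces_Rdiag' lam hlam0 R hRdiag m]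
    have hN : ((m : ℂ) + 1) ≠ 0 := Nat.cast_add_one_ne_zero m
    have hP : cesPP lam m m ≠ 0 := cesPP_ne lam hlam0 hlam m m
    exact ces_alg3 lam _ _ hP hlam0 hN
  | succ d ih =>
    intro m hm
    rw [Finset.sum_eq_sum_Ico_succ_bot (by omega), ih (m + 1) (by omega),
      ces_Rlow' lam R hRlow m n (by omega),
      cesPP_bot' lam hlam0 m n (by omega)]
    have hQ : cesPP lam (m + 1) n ≠ 0 := cesPP_ne lam hlam0 hlam (m + 1) n
    have hN : ((n : ℂ) + 1) ≠ 0 := Nat.cast_add_one_ne_zero n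
    have hM : ((m : ℂ) + 1) ≠ 0 := Nat.cast_add_one_ne_zero m
    have hb : (1 : ℂ) - 1 / (((m : ℂ) + 1) * lam) ≠ 0 := by
      have := ces_b_ne lam hlam0 hlam (m + 1) (by omega); push_cast at this
      exact this
    have hb1 : ((m : ℂ) + 1) * lam - 1 ≠ 0 := ces_frac_ne lam _ hM hlam0 hb
    exact ces_alg2 lam _ _ _ hQ hlam0 hM hN hb1

include hlam0 hlam hRdiag hRlow in
private lemma ces_rowSum (n k : ℕ) (h : k ≤ n) :
    ∑ j ∈ Finset.Ico k (n + 1), R n j / ((j : ℂ) + 1)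
      = -1 / (((n : ℂ) + 1) * lam * cesPP lam k n) :=
  ces_rowSum_aux lam hlam0 hlam R hRdiag hRlow n (n - k) k (by omega)

include hlam0 hlam hRdiag hRlow in
private lemma ces_coeff1 (m n : ℕ) (h : m ≤ n) :
    (1 / ((n : ℂ) + 1)) * (∑ j ∈ Finset.Ico m (n + 1), R j m) - lam * R n m
      = if m = n then 1 else 0 := by
  have hN : ((n : ℂ) + 1) ≠ 0 := Nat.cast_add_one_ne_zero n
  rcases eq_or_lt_of_le h with rfl | hlt
  · rw [if_pos rfl, ces_colSum lam hlam0 hlam R hRdiag hRlow m m le_rfl,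
      ces_Rdiag' lam hlam0 R hRdiag m, cesPP_diag' lam hlam0 m]
    have hb : (1 : ℂ) - 1 / (((m : ℂ) + 1) * lam) ≠ 0 := by
      have := ces_b_ne lam hlam0 hlam (m + 1) (by omega); push_cast at this
      exact this
    have hb1 : ((m : ℂ) + 1) * lam - 1 ≠ 0 := ces_frac_ne lam _ hN hlam0 hb
    exact ces_alg4 lam _ hlam0 hN hb1
  · rw [if_neg (by omega), ces_colSum lam hlam0 hlam R hRdiag hRlow n m h,
      ces_Rlow' lam R hRlow m n hlt]
    have hP : cesPP lam m n ≠ 0 := cesPP_ne lam hlam0 hlam m n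
    exact ces_alg5 lam _ _ hP hlam0 hN

include hlam0 hlam hRdiag hRlow in
private lemma ces_coeff2 (k n : ℕ) (h : k ≤ n) :
    (∑ m ∈ Finset.Ico k (n + 1), R n m / ((m : ℂ) + 1)) - lam * R n k
      = if k = n then 1 else 0 := by
  have hN : ((n : ℂ) + 1) ≠ 0 := Nat.cast_add_one_ne_zero n
  rcases eq_or_lt_of_le h with rfl | hlt
  · rw [if_pos rfl, ces_rowSum lam hlam0 hlam R hRdiag hRlow k k le_rfl,
      ces_Rdiag' lam hlam0 R hRdiag k, cesPP_diag' lam hlam0 k]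
    have hb : (1 : ℂ) - 1 / (((k : ℂ) + 1) * lam) ≠ 0 := by
      have := ces_b_ne lam hlam0 hlam (k + 1) (by omega); push_cast at this
      exact this
    have hb1 : ((k : ℂ) + 1) * lam - 1 ≠ 0 := ces_frac_ne lam _ hN hlam0 hb
    exact ces_alg6 lam _ hlam0 hN hb1
  · rw [if_neg (by omega), ces_rowSum lam hlam0 hlam R hRdiag hRlow n k h,
      ces_Rlow' lam R hRlow k n hlt]
    have hP : cesPP lam k n ≠ 0 := cesPP_ne lam hlam0 hlam k n
    exact ces_alg7 lam _ _ hP hlam0 hN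

end

/-- For `λ ∉ {0} ∪ {1/k : k ≥ 1}`, the lower triangular matrix `R` with diagonal entries
`R_{nn} = 1/(1/n - λ)`, entries `R_{nm} = -1/(n λ² ∏_{k=m}^n (1 - 1/(kλ)))` for `m < n`
and `0` for `m > n` induces the two-sided inverse of `C - λI` on `ℂ^ℕ`, where `C` is the
Cesàro operator.  (Sequences are indexed by `ℕ = {0,1,2,...}`, with index `j`
corresponding to coordinate `j+1`.) -/
theorem cesaro_resolvent_formula (lam : ℂ) (hlam0 : lam ≠ 0)
    (hlam : ∀ k : ℕ, 1 ≤ k → lam ≠ 1 / (k : ℂ))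
    (Ces : (ℕ → ℂ) → (ℕ → ℂ))
    (hCes : ∀ x : ℕ → ℂ, ∀ n : ℕ,
      Ces x n = (1 / ((n : ℂ) + 1)) * ∑ k ∈ Finset.range (n + 1), x k)
    (R : ℕ → ℕ → ℂ)
    (hRdiag : ∀ n : ℕ, R n n = 1 / (1 / ((n : ℂ) + 1) - lam))
    (hRlow : ∀ m n : ℕ, m < n →
      R n m = -1 / (((n : ℂ) + 1) * lam ^ 2 *
        ∏ k ∈ Finset.Icc (m + 1) (n + 1), (1 - 1 / (k * lam))))
    (hRup : ∀ m n : ℕ, n < m → R n m = 0)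
    (TR : (ℕ → ℂ) → (ℕ → ℂ))
    (hTR : ∀ x : ℕ → ℂ, ∀ n : ℕ, TR x n = ∑ m ∈ Finset.range (n + 1), R n m * x m) :
    (∀ x : ℕ → ℂ, Ces (TR x) - lam • TR x = x) ∧
    (∀ x : ℕ → ℂ, TR (Ces x - lam • x) = x) := by
  constructor
  · intro x
    funext n
    simp only [Pi.sub_apply, Pi.smul_apply, smul_eq_mul]
    rw [hCes, hTR]
    have h1 : ∑ k ∈ Finset.range (n + 1), TR x k
        = ∑ k ∈ Finset.range (n + 1), ∑ m ∈ Finset.range (k + 1), R k m * x m :=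
      Finset.sum_congr rfl fun k _ => hTR x k
    rw [h1, ces_tri_swap n (fun k m => R k m * x m), Finset.mul_sum, Finset.mul_sum,
      ← Finset.sum_sub_distrib]
    have h2 : ∀ m ∈ Finset.range (n + 1),
        1 / ((n : ℂ) + 1) * ∑ k ∈ Finset.Ico m (n + 1), R k m * x m - lam * (R n m * x m)
          = (if m = n then (1 : ℂ) else 0) * x m := by
      intro m hm
      have hmn : m ≤ n := by simp only [Finset.mem_range] at hm; omega
      rw [← Finset.sum_mul]
      have := ces_coeff1 lam hlam0 hlam R hRdiag hRlow m n hmn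
      linear_combination x m * this
    rw [Finset.sum_congr rfl h2, Finset.sum_eq_single_of_mem n (Finset.self_mem_range_succ n)
      (fun b _ hb => by rw [if_neg hb, zero_mul]), if_pos rfl, one_mul]
  · intro x
    funext n
    rw [hTR]
    have h1 : ∀ m ∈ Finset.range (n + 1),
        R n m * ((Ces x - lam • x) m)
          = ∑ k ∈ Finset.range (m + 1), R n m / ((m : ℂ) + 1) * x k
              - lam * (R n m * x m) := by
      intro m _
      rw [Pi.sub_apply, Pi.smul_apply, smul_eq_mul, hCes, ← Finset.mul_sum]
      ring
    rw [Finset.sum_congr rfl h1, Finset.sum_sub_distrib,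
      ces_tri_swap n (fun m k => R n m / ((m : ℂ) + 1) * x k), ← Finset.sum_sub_distrib]
    have h2 : ∀ k ∈ Finset.range (n + 1),
        (∑ m ∈ Finset.Ico k (n + 1), R n m / ((m : ℂ) + 1) * x k) - lam * (R n k * x k)
          = (if k = n then (1 : ℂ) else 0) * x k := by
      intro k hk
      have hkn : k ≤ n := by simp only [Finset.mem_range] at hk; omega
      rw [← Finset.sum_mul]
      have := ces_coeff2 lam hlam0 hlam R hRdiag hRlow k n hkn
      linear_combination x k * this
    rw [Finset.sum_congr rfl h2, Finset.sum_eq_single_of_mem n (Finset.self_mem_range_succ n)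
      (fun b _ hb => by rw [if_neg hb, zero_mul]), if_pos rfl, one_mul]
end
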